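/- Let a(t) = d/(c+t)^b and φ(t) = ∫₀ᵗ a(s)²/2 ds, where b ∈ (0, 1/4] and c, d are positive constants, and set θ = 1 − 2b > 0. Then for every t > 0: (d²/2)(1 − 2b/(c^θ d²)) ∫₀ᵗ e^{φ(s)}/(s+c)^{3b} ds < e^{φ(t)}/(c+t)^b. -/

import Mathlib

open Filter Topology Set intervalIntegral

/-- Let `a(t) = d/(c+t)^b` and `φ(t) = ∫₀ᵗ a(s)²/2 ds`, where
`b ∈ (0, 1/4]` and `c, d` are positive constants, and set `θ = 1 - 2b > 0`.  Then for
every `t > 0`: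
`(d²/2)(1 - 2b/(c^θ d²)) ∫₀ᵗ e^{φ(s)}/(s+c)^{3b} ds < e^{φ(t)}/(c+t)^b`. -/
theorem dsm_weighted_exponential_integral_inequality
    (b c d : ℝ) (hb : 0 < b) (hb4 : b ≤ 1 / 4) (hc : 0 < c) (hd : 0 < d)
    (a φ : ℝ → ℝ) (ha : ∀ t : ℝ, a t = d / (c + t) ^ b)
    (hφ : ∀ t : ℝ, φ t = ∫ s in (0 : ℝ)..t, a s ^ 2 / 2) :
    ∀ t : ℝ, 0 < t →
      d ^ 2 / 2 * (1 - 2 * b / (c ^ (1 - 2 * b) * d ^ 2)) *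
          ∫ s in (0 : ℝ)..t, Real.exp (φ s) / (s + c) ^ (3 * b)
        < Real.exp (φ t) / (c + t) ^ b := by
  intro t ht
  set K : ℝ := d ^ 2 / 2 * (1 - 2 * b / (c ^ (1 - 2 * b) * d ^ 2)) with hKdef
  set f : ℝ → ℝ := fun s => (d / (c + s) ^ b) ^ 2 / 2 with hfdef
  have hfa : ∀ s, a s ^ 2 / 2 = f s := fun s => by rw [ha]
  -- continuity of f on Ioi (-c)
  have hopen : IsOpen (Ioi (-c)) := isOpen_Ioi
  have hbase : ∀ s ∈ Ioi (-c), (0:ℝ) < c + s := fun s hs => by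
    have : -c < s := hs; linarith
  have hfc : ContinuousOn f (Ioi (-c)) := by
    apply ContinuousOn.div_const
    apply ContinuousOn.pow
    apply ContinuousOn.div continuousOn_const
    · exact (continuousOn_const.add continuousOn_id).rpow_const
        (fun s hs => Or.inl (ne_of_gt (hbase s hs)))
    · exact fun s hs => ne_of_gt (Real.rpow_pos_of_pos (hbase s hs) b)
  -- φ as integral of f
  have hφf : φ = fun u => ∫ x in (0:ℝ)..u, f x := by
    funext u; rw [hφ]
    exact intervalIntegral.integral_congr (fun s _ => hfa s)
  have hmem : ∀ s : ℝ, -c < s → s ∈ Ioi (-c) := fun s hs => hs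
  have hφd : ∀ s : ℝ, -c < s → HasDerivAt φ (f s) s := by
    intro s hs
    rw [hφf]
    apply intervalIntegral.integral_hasDerivAt_right
    · apply (hfc.mono ?_).intervalIntegrable
      intro x hx
      have h1 : min 0 s ≤ x := hx.1
      have : (-c) < min 0 s := lt_min (by linarith) hs
      exact lt_of_lt_of_le this h1
    · exact hfc.stronglyMeasurableAtFilter hopen s hs
    · exact hfc.continuousAt (hopen.mem_nhds hs)
  have hφcont : ContinuousOn φ (Ioi (-c)) :=
    fun s hs => ((hφd s hs).continuousAt).continuousWithinAt
  -- G and its derivative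
  set G : ℝ → ℝ := fun s => Real.exp (φ s) * (c + s) ^ (-b) with hGdef
  set g' : ℝ → ℝ := fun s =>
    Real.exp (φ s) * f s * (c + s) ^ (-b)
      + Real.exp (φ s) * (1 * (-b) * (c + s) ^ (-b - 1)) with hg'def
  have hGd : ∀ s : ℝ, -c < s → HasDerivAt G (g' s) s := by
    intro s hs
    have h1 : HasDerivAt (fun u => Real.exp (φ u)) (Real.exp (φ s) * f s) s :=
      (hφd s hs).exp
    have h2 : HasDerivAt (fun u => (c + u) ^ (-b)) (1 * (-b) * (c + s) ^ (-b - 1)) s :=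
      ((hasDerivAt_id s).const_add c).rpow_const (Or.inl (ne_of_gt (hbase s hs)))
    have := h1.mul h2
    exact this
  have hsub : Icc (0:ℝ) t ⊆ Ioi (-c) := fun x hx => by
    have := hx.1; simp only [mem_Ioi]; linarith
  have huIcc : uIcc (0:ℝ) t = Icc 0 t := uIcc_of_le ht.le
  -- continuity of g' on [0,t]
  have hg'c : ContinuousOn g' (Icc 0 t) := by
    have hφc : ContinuousOn φ (Icc 0 t) := hφcont.mono hsub
    have hfc' : ContinuousOn f (Icc 0 t) := hfc.mono hsub
    have hb1 : ContinuousOn (fun s => (c + s) ^ (-b) : ℝ → ℝ) (Icc 0 t) :=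
      (continuousOn_const.add continuousOn_id).rpow_const
        (fun s hs => Or.inl (ne_of_gt (hbase s (hsub hs))))
    have hb2 : ContinuousOn (fun s => (c + s) ^ (-b - 1) : ℝ → ℝ) (Icc 0 t) :=
      (continuousOn_const.add continuousOn_id).rpow_const
        (fun s hs => Or.inl (ne_of_gt (hbase s (hsub hs))))
    exact ((hφc.rexp.mul hfc').mul hb1).add
      (hφc.rexp.mul ((continuousOn_const.mul hb2)))
  have hg'int : IntervalIntegrable g' MeasureTheory.volume 0 t := by
    apply ContinuousOn.intervalIntegrable; rwa [huIcc]
  -- FTC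
  have hFTC : ∫ s in (0:ℝ)..t, g' s = G t - G 0 := by
    apply intervalIntegral.integral_eq_sub_of_hasDerivAt
    · intro x hx
      rw [huIcc] at hx
      exact hGd x (hsub hx)
    · exact hg'int
  -- the LHS integrand
  set h : ℝ → ℝ := fun s => Real.exp (φ s) / (s + c) ^ (3 * b) with hhdef
  have hhc : ContinuousOn h (Icc 0 t) := by
    apply ContinuousOn.div (hφcont.mono hsub).rexp
    · exact (continuousOn_id.add continuousOn_const).rpow_const
        (fun s hs => Or.inl (by
          have := hbase s (hsub hs); rw [add_comm] at this; exact ne_of_gt this))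
    · intro s hs
      have : (0:ℝ) < s + c := by have := hbase s (hsub hs); linarith [this]
      exact ne_of_gt (Real.rpow_pos_of_pos this _)
  have hhint : IntervalIntegrable (fun s => K * h s) MeasureTheory.volume 0 t := by
    apply ContinuousOn.intervalIntegrable; rw [huIcc]
    exact continuousOn_const.mul hhc
  -- K equals d²/2 - b * c^(2b-1)
  have hcθ : (0:ℝ) < c ^ (1 - 2*b) := Real.rpow_pos_of_pos hc _
  have hKval : K = d ^ 2 / 2 - b * c ^ (2*b - 1) := by
    have h1 : c ^ (2*b - 1) = (c ^ (1 - 2*b))⁻¹ := by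
      rw [← Real.rpow_neg hc.le]; ring_nf
    rw [hKdef, h1]
    field_simp
  -- pointwise bound
  have hpt : ∀ s ∈ Icc (0:ℝ) t, K * h s ≤ g' s := by
    intro s hs
    have hx : (0:ℝ) < c + s := hbase s (hsub hs)
    have hxc : c ≤ c + s := by linarith [hs.1]
    have hexp : (0:ℝ) < Real.exp (φ s) := Real.exp_pos _
    have hpow3 : (0:ℝ) < (c + s) ^ (-(3*b)) := Real.rpow_pos_of_pos hx _
    -- rewrite f s
    have hfval : f s = d ^ 2 / 2 * (c + s) ^ (-(2*b)) := by
      rw [hfdef]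
      simp only
      rw [div_pow, ← Real.rpow_natCast ((c+s)^b) 2, ← Real.rpow_mul hx.le]
      rw [Real.rpow_neg hx.le]
      push_cast
      ring_nf
    have hsplit1 : (c + s) ^ (-(2*b)) * (c + s) ^ (-b) = (c + s) ^ (-(3*b)) := by
      rw [← Real.rpow_add hx]; ring_nf
    have hsplit2 : (c + s) ^ (-b - 1) = (c + s) ^ (-(3*b)) * (c + s) ^ (2*b - 1) := by
      rw [← Real.rpow_add hx]; ring_nf
    have hhval : h s = Real.exp (φ s) * (c + s) ^ (-(3*b)) := by
      rw [hhdef]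
      simp only
      rw [add_comm s c, Real.rpow_neg hx.le, div_eq_mul_inv]
    have hmono : (c + s) ^ (2*b - 1) ≤ c ^ (2*b - 1) :=
      Real.rpow_le_rpow_of_nonpos hc hxc (by linarith)
    have hkey : K ≤ d ^ 2 / 2 - b * (c + s) ^ (2*b - 1) := by
      rw [hKval]
      have : b * (c + s) ^ (2*b - 1) ≤ b * c ^ (2*b - 1) :=
        mul_le_mul_of_nonneg_left hmono hb.le
      linarith
    calc K * h s = K * (Real.exp (φ s) * (c + s) ^ (-(3*b))) := by rw [hhval]
      _ ≤ (d ^ 2 / 2 - b * (c + s) ^ (2*b - 1)) * (Real.exp (φ s) * (c + s) ^ (-(3*b))) := by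
          apply mul_le_mul_of_nonneg_right hkey (by positivity)
      _ = g' s := by
          rw [hg'def]
          simp only
          rw [hfval, hsplit2]
          linear_combination (-(Real.exp (φ s) * (d ^ 2 / 2))) * hsplit1
  -- integral comparison
  have hint_mono : ∫ s in (0:ℝ)..t, K * h s ≤ ∫ s in (0:ℝ)..t, g' s :=
    intervalIntegral.integral_mono_on ht.le hhint hg'int hpt
  have hKint : ∫ s in (0:ℝ)..t, K * h s = K * ∫ s in (0:ℝ)..t, h s :=
    intervalIntegral.integral_const_mul K h
  have hG0 : 0 < G 0 := by
    rw [hGdef]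
    simp only
    positivity
  have hGt : G t = Real.exp (φ t) / (c + t) ^ b := by
    rw [hGdef]
    simp only
    rw [Real.rpow_neg (by linarith : (0:ℝ) ≤ c + t), div_eq_mul_inv]
  calc K * ∫ s in (0:ℝ)..t, h s = ∫ s in (0:ℝ)..t, K * h s := hKint.symm
    _ ≤ ∫ s in (0:ℝ)..t, g' s := hint_mono
    _ = G t - G 0 := hFTC
    _ < G t := by linarith
    _ = _ := hGt
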